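/- arXiv:2504.19527 — 2 statements merged into one kernel-verified Lean document; each statement's English description precedes it below -/
import Mathlib

section
/- Inverse probability weighting identity (Eq. (2)). Fix a ∈ {0,1}. Assume consistency, that (S₁(a), S₂(a), Y(a)) ⫫ A | σ(X), and that R₃ ⫫ Y | σ(X, A, S₁, S₂). Let e_a : 𝒳 → ℝ be measurable with e_a(X) a version of P(A=a | σ(X)) and e_a(X) > 0 P-a.s., and let r₃ be a σ(X, A, S₁, S₂)-measurable random variable that is a version of P(R₃=1 | σ(X, A, S₁, S₂)) with r₃ > 0 P-a.s. Assume the random variable 𝟙{A=a} · R₃ · Y / (e_a(X) · r₃) is P-integrable. Then E[ 𝟙{A=a} · R₃ · Y / (e_a(X) · r₃) | σ(X) ] = E[ Y(a) | σ(X) ] P-almost surely. -/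
open MeasureTheory ProbabilityTheory

lemma sup_eq_generateFrom_inter {Ω : Type*} (m' m₂ : MeasurableSpace Ω) :
    m' ⊔ m₂ = MeasurableSpace.generateFrom
      {s | ∃ s₁ s₂, MeasurableSet[m'] s₁ ∧ MeasurableSet[m₂] s₂ ∧ s = s₁ ∩ s₂} := by
  refine le_antisymm (sup_le ?_ ?_) (MeasurableSpace.generateFrom_le ?_)
  · intro s hs
    exact MeasurableSpace.measurableSet_generateFrom ⟨s, Set.univ, hs, MeasurableSet.univ,
      (Set.inter_univ s).symm⟩
  · intro s hs
    exact MeasurableSpace.measurableSet_generateFrom ⟨Set.univ, s, MeasurableSet.univ, hs,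
      (Set.univ_inter s).symm⟩
  · rintro s ⟨s₁, s₂, hs₁, hs₂, rfl⟩
    exact ((le_sup_left : m' ≤ m' ⊔ m₂) s₁ hs₁).inter ((le_sup_right : m₂ ≤ m' ⊔ m₂) s₂ hs₂)

lemma isPiSystem_inter_sets {Ω : Type*} (m' m₂ : MeasurableSpace Ω) :
    IsPiSystem {s : Set Ω | ∃ s₁ s₂, MeasurableSet[m'] s₁ ∧ MeasurableSet[m₂] s₂ ∧ s = s₁ ∩ s₂} := by
  rintro s ⟨s₁, s₂, hs₁, hs₂, rfl⟩ t ⟨t₁, t₂, ht₁, ht₂, rfl⟩ -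
  exact ⟨s₁ ∩ t₁, s₂ ∩ t₂, hs₁.inter ht₁, hs₂.inter ht₂, by ext x; simp; tauto⟩

lemma indicator_one_mul' {Ω : Type*} (v : Set Ω) (g : Ω → ℝ) :
    (v.indicator (fun _ => (1 : ℝ))) * g = v.indicator g := by
  funext x
  by_cases hx : x ∈ v <;> simp [Set.indicator, hx]

/-- If `m₁ ⫫ m₂ | m'` then for `t ∈ m₁`, `μ⟦t | m' ⊔ m₂⟧ = μ⟦t | m'⟧` a.e. -/
lemma condexp_indicator_sup_of_condIndep {Ω : Type*} {m' m₁ m₂ : MeasurableSpace Ω}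
    {mΩ : MeasurableSpace Ω}
    [StandardBorelSpace Ω] [Nonempty Ω] {μ : Measure Ω} [IsProbabilityMeasure μ]
    {hm' : m' ≤ mΩ} (hm₁ : m₁ ≤ mΩ) (hm₂ : m₂ ≤ mΩ)
    (hCI : CondIndep m' m₁ m₂ hm' μ) {t : Set Ω} (ht : MeasurableSet[m₁] t) :
    μ[t.indicator (fun _ => (1 : ℝ)) | m' ⊔ m₂]
      =ᵐ[μ] μ[t.indicator (fun _ => (1 : ℝ)) | m'] := by
  have hsup : m' ⊔ m₂ ≤ mΩ := sup_le hm' hm₂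
  have hCI' := (condIndep_iff m' m₁ m₂ hm' hm₁ hm₂ μ).mp hCI
  have htΩ : MeasurableSet[mΩ] t := hm₁ t ht
  have hind_int : Integrable (t.indicator fun _ => (1 : ℝ)) μ :=
    (integrable_const (1 : ℝ)).indicator htΩ
  set cexp : Ω → ℝ := μ[t.indicator (fun _ => (1 : ℝ)) | m'] with hcexp
  have key : ∀ s : Set Ω, MeasurableSet[m' ⊔ m₂] s →
      ∫ x in s, cexp x ∂μ = ∫ x in s, t.indicator (fun _ => (1 : ℝ)) x ∂μ := by
    intro s hs
    refine MeasurableSpace.induction_on_inter (m := m' ⊔ m₂)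
      (C := fun s _ => ∫ x in s, cexp x ∂μ = ∫ x in s, t.indicator (fun _ => (1 : ℝ)) x ∂μ)
      (sup_eq_generateFrom_inter m' m₂) (isPiSystem_inter_sets m' m₂)
      (by simp) ?_ ?_ ?_ s hs
    · -- basic sets
      rintro u ⟨s₁, s₂, hs₁, hs₂, rfl⟩
      have hs₁Ω : MeasurableSet[mΩ] s₁ := hm' s₁ hs₁
      have hs₂Ω : MeasurableSet[mΩ] s₂ := hm₂ s₂ hs₂
      have hs₂int : Integrable (s₂.indicator fun _ => (1 : ℝ)) μ :=
        (integrable_const (1 : ℝ)).indicator hs₂Ω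
      have hbd : ∀ (g : Ω → ℝ), Integrable g μ →
          Integrable ((s₂.indicator fun _ => (1 : ℝ)) * g) μ := by
        intro g hg
        refine hg.bdd_mul ((measurable_const.indicator hs₂Ω).stronglyMeasurable).aestronglyMeasurable
          (c := 1) (Filter.Eventually.of_forall fun x => ?_)
        by_cases hx : x ∈ s₂ <;> simp [Set.indicator, hx]
      have hsplit : ∀ (g : Ω → ℝ),
          ∫ x in s₁ ∩ s₂, g x ∂μ
            = ∫ x in s₁, ((s₂.indicator fun _ => (1 : ℝ)) * g) x ∂μ := by
        intro g
        rw [indicator_one_mul', setIntegral_indicator hs₂Ω]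
      -- left side
      have hL : ∫ x in s₁ ∩ s₂, cexp x ∂μ
          = ∫ x in s₁, ((μ[t.indicator (fun _ => (1:ℝ)) | m']) * (μ[s₂.indicator (fun _ => (1:ℝ)) | m'])) x ∂μ := by
        rw [hsplit cexp, ← setIntegral_condExp hm' (hbd cexp integrable_condExp) hs₁]
        refine setIntegral_congr_ae (hm' s₁ hs₁) ?_
        have h1 : (s₂.indicator fun _ => (1:ℝ)) * cexp = cexp * (s₂.indicator fun _ => (1:ℝ)) :=
          mul_comm _ _
        have h2 := condExp_mul_of_stronglyMeasurable_left (μ := μ) (m := m')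
          (stronglyMeasurable_condExp (f := t.indicator fun _ => (1:ℝ)))
          (by rw [← h1]; exact hbd cexp integrable_condExp) hs₂int
        rw [h1]
        filter_upwards [h2] with x hx _
        exact hx
      -- right side
      have hR : ∫ x in s₁ ∩ s₂, t.indicator (fun _ => (1:ℝ)) x ∂μ
          = ∫ x in s₁, ((μ[t.indicator (fun _ => (1:ℝ)) | m']) * (μ[s₂.indicator (fun _ => (1:ℝ)) | m'])) x ∂μ := by
        have hint2 : Integrable ((t ∩ s₂).indicator fun _ => (1:ℝ)) μ :=
          (integrable_const (1 : ℝ)).indicator (htΩ.inter hs₂Ω)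
        have heq : (s₂.indicator fun _ => (1:ℝ)) * (t.indicator fun _ => (1:ℝ))
            = (t ∩ s₂).indicator fun _ => (1:ℝ) := by
          funext x
          by_cases hx : x ∈ s₂ <;> by_cases hx' : x ∈ t <;>
            simp [Set.indicator, hx, hx']
        rw [hsplit, heq, ← setIntegral_condExp hm' hint2 hs₁]
        refine setIntegral_congr_ae (hm' s₁ hs₁) ?_
        filter_upwards [hCI' t s₂ ht hs₂] with x hx _
        exact hx
      rw [hL, hR]
    · -- complements
      intro u hu h
      have huΩ : MeasurableSet[mΩ] u := hsup u hu
      have h1 := integral_add_compl huΩ (integrable_condExp :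
        Integrable (μ[t.indicator (fun _ => (1 : ℝ)) | m']) μ)
      have h2 := integral_add_compl huΩ hind_int
      have h3 : ∫ x, cexp x ∂μ = ∫ x, t.indicator (fun _ => (1 : ℝ)) x ∂μ :=
        integral_condExp hm'
      have h1' : ∫ x in u, cexp x ∂μ + ∫ x in uᶜ, cexp x ∂μ = ∫ x, cexp x ∂μ := h1
      linarith
    · -- disjoint unions
      intro f hdisj hmeas h
      have hmeasΩ : ∀ i, MeasurableSet[mΩ] (f i) := fun i => hsup _ (hmeas i)
      rw [integral_iUnion hmeasΩ hdisj integrable_condExp.integrableOn,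
        integral_iUnion hmeasΩ hdisj hind_int.integrableOn]
      exact tsum_congr h
  exact (ae_eq_condExp_of_forall_setIntegral_eq hsup hind_int
    (fun s _ _ => integrable_condExp.integrableOn)
    (fun s hs _ => key s hs)
    ⟨_, stronglyMeasurable_condExp.mono le_sup_left, Filter.EventuallyEq.refl _ _⟩).symm

/-- **Inverse probability weighting identity (Eq. (2)).** Under consistency,
unconfoundedness `(S₁(a), S₂(a), Y(a)) ⫫ A | σ(X)` and sequential missingness
`R₃ ⫫ Y | σ(X, A, S₁, S₂)`, with a.s. positive propensity score `e_a(X)` and selection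
score `r₃`, we have `E[𝟙{A=a}·R₃·Y/(e_a(X)·r₃) | σ(X)] = E[Y(a) | σ(X)]` `P`-a.s. -/
theorem stmt3
    {Ω 𝓧 : Type*} [mΩ : MeasurableSpace Ω] [StandardBorelSpace Ω] [Nonempty Ω]
    [m𝓧 : MeasurableSpace 𝓧] [StandardBorelSpace 𝓧]
    (P : Measure Ω) [IsProbabilityMeasure P]
    (X : Ω → 𝓧) (hX : Measurable X)
    (A : Ω → Bool) (hA : Measurable A)
    (S₁ S₂ Y : Bool → Ω → ℝ)
    (hS₁ : ∀ a, Measurable (S₁ a)) (hS₂ : ∀ a, Measurable (S₂ a))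
    (hYmeas : ∀ a, Measurable (Y a)) (hYint : ∀ a, Integrable (Y a) P)
    (S₁o S₂o Yo : Ω → ℝ)
    (hS₁o : Measurable S₁o) (hS₂o : Measurable S₂o) (hYo : Measurable Yo)
    (hcons₁ : S₁o = fun ω => S₁ (A ω) ω)
    (hcons₂ : S₂o = fun ω => S₂ (A ω) ω)
    (hconsY : Yo = fun ω => Y (A ω) ω)
    (R₃ : Ω → Bool) (hR₃ : Measurable R₃)
    -- fixed arm
    (a : Bool)
    -- unconfoundedness for arm a
    (hunconf : CondIndep (MeasurableSpace.comap X m𝓧)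
      (MeasurableSpace.comap (fun ω => (S₁ a ω, S₂ a ω, Y a ω)) inferInstance)
      (MeasurableSpace.comap A inferInstance) hX.comap_le P)
    -- sequential missingness of the long-term outcome
    (hseq3 : CondIndep
      (MeasurableSpace.comap X m𝓧 ⊔ MeasurableSpace.comap A inferInstance
        ⊔ MeasurableSpace.comap S₁o inferInstance ⊔ MeasurableSpace.comap S₂o inferInstance)
      (MeasurableSpace.comap R₃ inferInstance) (MeasurableSpace.comap Yo inferInstance)
      (sup_le (sup_le (sup_le hX.comap_le hA.comap_le) hS₁o.comap_le) hS₂o.comap_le) P)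
    -- propensity score
    (e : 𝓧 → ℝ) (he : Measurable e)
    (heVer : (fun ω => e (X ω)) =ᵐ[P]
      P[({ω | A ω = a}).indicator (fun _ => (1 : ℝ)) | MeasurableSpace.comap X m𝓧])
    (hePos : ∀ᵐ ω ∂P, 0 < e (X ω))
    -- selection score
    (r₃ : Ω → ℝ)
    (hr₃Meas : Measurable[MeasurableSpace.comap X m𝓧 ⊔ MeasurableSpace.comap A inferInstance
      ⊔ MeasurableSpace.comap S₁o inferInstance ⊔ MeasurableSpace.comap S₂o inferInstance] r₃)
    (hr₃Ver : r₃ =ᵐ[P] P[({ω | R₃ ω = true}).indicator (fun _ => (1 : ℝ)) |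
      MeasurableSpace.comap X m𝓧 ⊔ MeasurableSpace.comap A inferInstance
        ⊔ MeasurableSpace.comap S₁o inferInstance ⊔ MeasurableSpace.comap S₂o inferInstance])
    (hr₃Pos : ∀ᵐ ω ∂P, 0 < r₃ ω)
    -- integrability of the weighted outcome
    (hWint : Integrable (fun ω => ({ω' | A ω' = a}).indicator (fun _ => (1 : ℝ)) ω
      * ({ω' | R₃ ω' = true}).indicator (fun _ => (1 : ℝ)) ω * Yo ω / (e (X ω) * r₃ ω)) P) :
    P[fun ω => ({ω' | A ω' = a}).indicator (fun _ => (1 : ℝ)) ω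
        * ({ω' | R₃ ω' = true}).indicator (fun _ => (1 : ℝ)) ω * Yo ω / (e (X ω) * r₃ ω) |
      MeasurableSpace.comap X m𝓧]
      =ᵐ[P] P[Y a | MeasurableSpace.comap X m𝓧] := by
  classical
  -- abbreviations
  set 𝒢 : MeasurableSpace Ω := MeasurableSpace.comap X m𝓧 with h𝒢def
  set mA : MeasurableSpace Ω := MeasurableSpace.comap A inferInstance with hmAdef
  set mS1 : MeasurableSpace Ω := MeasurableSpace.comap S₁o inferInstance with hmS1def
  set mS2 : MeasurableSpace Ω := MeasurableSpace.comap S₂o inferInstance with hmS2def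
  set mY : MeasurableSpace Ω := MeasurableSpace.comap Yo inferInstance with hmYdef
  set mR : MeasurableSpace Ω := MeasurableSpace.comap R₃ inferInstance with hmRdef
  have hT : Measurable[mΩ] (fun ω => (S₁ a ω, S₂ a ω, Y a ω)) :=
    (hS₁ a).prodMk ((hS₂ a).prodMk (hYmeas a))
  set mT : MeasurableSpace Ω :=
    MeasurableSpace.comap (fun ω => (S₁ a ω, S₂ a ω, Y a ω)) inferInstance with hmTdef
  set ℋ : MeasurableSpace Ω := 𝒢 ⊔ mA ⊔ mS1 ⊔ mS2 with hℋdef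
  set ℋ' : MeasurableSpace Ω := ℋ ⊔ mY with hℋ'def
  set 𝒢' : MeasurableSpace Ω := 𝒢 ⊔ mT with h𝒢'def
  letI : MeasurableSpace Ω := mΩ
  have hℋle : ℋ ≤ mΩ :=
    sup_le (sup_le (sup_le hX.comap_le hA.comap_le) hS₁o.comap_le) hS₂o.comap_le
  have hℋ'le : ℋ' ≤ mΩ := sup_le hℋle hYo.comap_le
  have h𝒢'le : 𝒢' ≤ mΩ := sup_le hX.comap_le hT.comap_le
  have h𝒢ℋ : 𝒢 ≤ ℋ := (le_sup_left.trans le_sup_left).trans le_sup_left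
  have hAℋ : mA ≤ ℋ := (le_sup_right.trans le_sup_left).trans le_sup_left
  have h𝒢ℋ' : 𝒢 ≤ ℋ' := h𝒢ℋ.trans le_sup_left
  -- indicator functions
  set IA : Ω → ℝ := ({ω' | A ω' = a}).indicator (fun _ => (1 : ℝ)) with hIAdef
  set IR : Ω → ℝ := ({ω' | R₃ ω' = true}).indicator (fun _ => (1 : ℝ)) with hIRdef
  set W : Ω → ℝ := fun ω => IA ω * IR ω * Yo ω / (e (X ω) * r₃ ω) with hWdef
  -- basic measurability facts
  have hset_A : MeasurableSet[mA] {ω' | A ω' = a} := ⟨{a}, trivial, rfl⟩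
  have hset_R : MeasurableSet[mR] {ω' | R₃ ω' = true} := ⟨{true}, trivial, rfl⟩
  have hset_AΩ : MeasurableSet[mΩ] {ω' | A ω' = a} := hA.comap_le _ hset_A
  have hset_RΩ : MeasurableSet[mΩ] {ω' | R₃ ω' = true} := hR₃.comap_le _ hset_R
  have hIA_mA : Measurable[mA] IA := measurable_const.indicator hset_A
  have hIR_mR : Measurable[mR] IR := measurable_const.indicator hset_R
  have hYo_mY : Measurable[mY] Yo := measurable_iff_comap_le.mpr le_rfl
  have heX𝒢 : Measurable[𝒢] (fun ω => e (X ω)) :=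
    he.comp (measurable_iff_comap_le.mpr le_rfl)
  have hYa_mT : Measurable[mT] (Y a) := by
    intro s hs
    exact ⟨(fun p : ℝ × ℝ × ℝ => p.2.2) ⁻¹' s, measurable_snd.snd hs, rfl⟩
  have hIAint : Integrable IA P := (integrable_const (1 : ℝ)).indicator hset_AΩ
  have hIRint : Integrable IR P := (integrable_const (1 : ℝ)).indicator hset_RΩ
  -- ## Step 1: P[W | ℋ'] =ᵐ fun ω => IA ω * Y a ω / e (X ω)
  set h : Ω → ℝ := fun ω => IA ω * Y a ω / e (X ω) with hhdef
  set f1 : Ω → ℝ := fun ω => IA ω * Yo ω / (e (X ω) * r₃ ω) with hf1def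
  have hWeq : W = f1 * IR := by
    funext ω
    show IA ω * IR ω * Yo ω / (e (X ω) * r₃ ω)
      = IA ω * Yo ω / (e (X ω) * r₃ ω) * IR ω
    ring
  have hf1_sm : StronglyMeasurable[ℋ'] f1 := by
    refine Measurable.stronglyMeasurable ?_
    exact ((hIA_mA.mono (hAℋ.trans le_sup_left) le_rfl).mul
        (hYo_mY.mono le_sup_right le_rfl)).div
      ((heX𝒢.mono h𝒢ℋ' le_rfl).mul (hr₃Meas.mono le_sup_left le_rfl))
  have hf1IRint : Integrable (f1 * IR) P := hWeq ▸ hWint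
  have hW1 : P[W | ℋ'] =ᵐ[P] h := by
    have hce : P[W | ℋ'] =ᵐ[P] f1 * P[IR | ℋ'] := by
      rw [hWeq]
      exact condExp_mul_of_stronglyMeasurable_left hf1_sm hf1IRint hIRint
    have hred : P[IR | ℋ'] =ᵐ[P] r₃ := by
      refine (condexp_indicator_sup_of_condIndep hR₃.comap_le hYo.comap_le hseq3 hset_R).trans
        hr₃Ver.symm
    refine hce.trans ?_
    have : f1 * P[IR | ℋ'] =ᵐ[P] f1 * r₃ := Filter.EventuallyEq.mul (Filter.EventuallyEq.refl _ f1) hred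
    refine this.trans ?_
    filter_upwards [hr₃Pos, hePos] with ω hr heω
    show f1 ω * r₃ ω = IA ω * Y a ω / e (X ω)
    by_cases hAa : A ω = a
    · have hIA1 : IA ω = 1 := by simp [hIAdef, Set.indicator_apply, hAa]
      have hYoa : Yo ω = Y a ω := by rw [hconsY]; simp [hAa]
      show IA ω * Yo ω / (e (X ω) * r₃ ω) * r₃ ω = IA ω * Y a ω / e (X ω)
      rw [hIA1, hYoa]
      field_simp
    · have hIA0 : IA ω = 0 := by simp [hIAdef, Set.indicator_apply, hAa]
      show IA ω * Yo ω / (e (X ω) * r₃ ω) * r₃ ω = IA ω * Y a ω / e (X ω)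
      rw [hIA0]
      simp
  -- ## Step 2: reduce P[W|𝒢] to P[h|𝒢]
  have hstep1 : P[W | 𝒢] =ᵐ[P] P[h | 𝒢] :=
    (condExp_condExp_of_le h𝒢ℋ' hℋ'le).symm.trans (condExp_congr_ae hW1)
  -- ## Step 3: P[h | 𝒢'] =ᵐ Y a
  have hhint : Integrable h P := integrable_condExp.congr hW1
  set f2 : Ω → ℝ := fun ω => Y a ω / e (X ω) with hf2def
  have hheq : h = f2 * IA := by
    funext ω
    show IA ω * Y a ω / e (X ω) = Y a ω / e (X ω) * IA ω
    ring
  have hf2_sm : StronglyMeasurable[𝒢'] f2 := by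
    refine Measurable.stronglyMeasurable ?_
    exact (hYa_mT.mono le_sup_right le_rfl).div (heX𝒢.mono le_sup_left le_rfl)
  have hf2IAint : Integrable (f2 * IA) P := hheq ▸ hhint
  have hunconf' : CondIndep 𝒢 mA mT hX.comap_le P := Kernel.Indep.symm hunconf
  have hh1 : P[h | 𝒢'] =ᵐ[P] Y a := by
    have hce : P[h | 𝒢'] =ᵐ[P] f2 * P[IA | 𝒢'] := by
      rw [hheq]
      exact condExp_mul_of_stronglyMeasurable_left hf2_sm hf2IAint hIAint
    have hred : P[IA | 𝒢'] =ᵐ[P] fun ω => e (X ω) := by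
      refine (condexp_indicator_sup_of_condIndep hA.comap_le hT.comap_le hunconf' hset_A).trans
        heVer.symm
    refine hce.trans ?_
    have : f2 * P[IA | 𝒢'] =ᵐ[P] f2 * fun ω => e (X ω) :=
      Filter.EventuallyEq.mul (Filter.EventuallyEq.refl _ f2) hred
    refine this.trans ?_
    filter_upwards [hePos] with ω heω
    show Y a ω / e (X ω) * e (X ω) = Y a ω
    field_simp
  have hstep2 : P[h | 𝒢] =ᵐ[P] P[Y a | 𝒢] :=
    (condExp_condExp_of_le le_sup_left h𝒢'le).symm.trans (condExp_congr_ae hh1)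
  exact hstep1.trans hstep2
end

section
/- Inverse probability weighted representation of the long-term ATE. Assume consistency; that for each a ∈ {0,1}, (S₁(a), S₂(a), Y(a)) ⫫ A | σ(X); and that R₃ ⫫ Y | σ(X, A, S₁, S₂). Let e₁, e₀ : 𝒳 → ℝ be measurable with e_a(X) a version of P(A=a | σ(X)) and e_a(X) > 0 P-a.s. for a ∈ {0,1}, and let r₃ be a σ(X, A, S₁, S₂)-measurable random variable that is a version of P(R₃=1 | σ(X, A, S₁, S₂)) with r₃ > 0 P-a.s. Assume the random variables 𝟙{A=a} · R₃ · Y / (e_a(X) · r₃) are P-integrable for a ∈ {0,1}. Then E[ (𝟙{A=1}/e₁(X) − 𝟙{A=0}/e₀(X)) · R₃ · Y / r₃ ] = E[ Y(1) − Y(0) ]. -/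
open MeasureTheory ProbabilityTheory

section Aux

open Filter Set

variable {Ω : Type*}


/-- Integration against a fixed a.e.-bounded weight is continuous on `L¹`. -/
lemma cont_weight_pairing [mΩ : MeasurableSpace Ω] {μ : Measure Ω} [IsFiniteMeasure μ]
    {w : Ω → ℝ} (hw : AEStronglyMeasurable w μ) (hbd : ∀ᵐ ω ∂μ, ‖w ω‖ ≤ 1) (s : Set Ω) :
    Continuous (fun f : Lp ℝ 1 μ => ∫ x in s, w x * f x ∂μ) := by
  have hint : ∀ f : Lp ℝ 1 μ, Integrable (fun x => w x * f x) μ := by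
    intro f
    exact (L1.integrable_coeFn f).bdd_mul hw hbd
  refine (LipschitzWith.of_dist_le_mul (K := 1) ?_).continuous
  intro f g
  rw [Real.dist_eq]; simp only [NNReal.coe_one, one_mul]
  have hIf : Integrable (fun x => w x * f x) (μ.restrict s) := (hint f).restrict (s := s)
  have hIg : Integrable (fun x => w x * g x) (μ.restrict s) := (hint g).restrict (s := s)
  have hIfg : Integrable (fun x => w x * f x - w x * g x) (μ.restrict s) := hIf.sub hIg
  have hfg : Integrable (fun x => f x - g x) μ :=
    (L1.integrable_coeFn f).sub (L1.integrable_coeFn g)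
  have h1 : ∫ x in s, w x * f x ∂μ - ∫ x in s, w x * g x ∂μ
      = ∫ x in s, (w x * f x - w x * g x) ∂μ := (integral_sub hIf hIg).symm
  rw [h1]
  have h2 : |∫ x in s, (w x * f x - w x * g x) ∂μ|
      ≤ ∫ x in s, |w x * f x - w x * g x| ∂μ := by
    simpa [Real.norm_eq_abs] using
      norm_integral_le_integral_norm (μ := μ.restrict s) (fun x => w x * f x - w x * g x)
  refine h2.trans ?_
  have h3 : ∫ x in s, |w x * f x - w x * g x| ∂μ ≤ ∫ x in s, |f x - g x| ∂μ := by
    refine integral_mono_ae hIfg.abs (hfg.restrict (s := s)).abs ?_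
    refine ae_restrict_of_ae ?_
    filter_upwards [hbd] with x hx
    have : |w x * f x - w x * g x| = ‖w x‖ * |f x - g x| := by
      rw [← mul_sub]; simp [abs_mul]
    rw [this]
    exact mul_le_of_le_one_left (abs_nonneg _) hx
  refine h3.trans ?_
  have h4 : ∫ x in s, |f x - g x| ∂μ ≤ ∫ x, |f x - g x| ∂μ :=
    setIntegral_le_integral hfg.abs (ae_of_all _ fun x => abs_nonneg _)
  refine h4.trans ?_
  rw [L1.dist_eq_integral_dist]
  refine le_of_eq (integral_congr_ae ?_)
  refine ae_of_all _ fun x => ?_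
  simp [Real.dist_eq]

/-- Pull-out of an independent indicator from a conditional expectation. -/
lemma condIndep_condexp_indicator_mul
    {m' m₁ m₂ : MeasurableSpace Ω}
    [mΩ : MeasurableSpace Ω] [StandardBorelSpace Ω] {μ : Measure Ω} [IsProbabilityMeasure μ]
    (hm' : m' ≤ mΩ) (hm₁ : m₁ ≤ mΩ) (hm₂ : m₂ ≤ mΩ)
    (hCI : CondIndep m' m₁ m₂ hm' μ)
    {B : Set Ω} (hB : MeasurableSet[m₂] B)
    {f : Ω → ℝ} (hf : StronglyMeasurable[m₁] f) (hfint : Integrable f μ) :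
    μ[fun ω => B.indicator (fun _ => (1:ℝ)) ω * f ω | m'] =ᵐ[μ]
      fun ω => (μ[B.indicator (fun _ => (1:ℝ)) | m']) ω * (μ[f | m']) ω := by
  classical
  have hBΩ : MeasurableSet[mΩ] B := hm₂ B hB
  set iB : Ω → ℝ := B.indicator (fun _ => (1:ℝ)) with hiB_def
  have hiB_bd : ∀ x, ‖iB x‖ ≤ 1 := by
    intro x; by_cases hx : x ∈ B <;>
      simp [hiB_def, Set.indicator_of_mem, Set.indicator_of_notMem, hx]
  have hiB_nonneg : ∀ x, 0 ≤ iB x := by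
    intro x; by_cases hx : x ∈ B <;>
      simp [hiB_def, Set.indicator_of_mem, Set.indicator_of_notMem, hx]
  have hiB_int : Integrable iB μ := (integrable_const 1).indicator hBΩ
  have hiB_aesm : AEStronglyMeasurable iB μ :=
    ((stronglyMeasurable_const.indicator hB).mono hm₂).aestronglyMeasurable
  set g₀ : Ω → ℝ := μ[iB | m'] with hg₀_def
  have hg₀_sm : StronglyMeasurable[m'] g₀ := stronglyMeasurable_condExp
  have hg₀_aesm : AEStronglyMeasurable g₀ μ := (hg₀_sm.mono hm').aestronglyMeasurable
  have hg₀_bd : ∀ᵐ x ∂μ, ‖g₀ x‖ ≤ 1 := by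
    have h1 : (0:Ω → ℝ) ≤ᵐ[μ] g₀ := condExp_nonneg (ae_of_all _ hiB_nonneg)
    have h2 : g₀ ≤ᵐ[μ] μ[(fun _ => (1:ℝ)) | m'] :=
      condExp_mono hiB_int (integrable_const 1)
        (ae_of_all _ fun x => by
          have := hiB_bd x
          rw [Real.norm_eq_abs, abs_le] at this
          exact this.2)
    rw [condExp_const hm'] at h2
    filter_upwards [h1, h2] with x hx1 hx2
    rw [Real.norm_eq_abs, abs_le]
    have hx1' : (0:ℝ) ≤ g₀ x := by simpa using hx1
    exact ⟨le_trans (by norm_num) hx1', hx2⟩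
  -- the set-integral identity on m'-sets
  have hset : ∀ ⦃f : Ω → ℝ⦄, MemLp f 1 μ → AEStronglyMeasurable[m₁] f μ →
      ∀ s, MeasurableSet[m'] s → ∫ x in s, g₀ x * f x ∂μ = ∫ x in s, iB x * f x ∂μ := by
    refine MemLp.induction_stronglyMeasurable hm₁ ENNReal.one_ne_top
      (fun f => ∀ s, MeasurableSet[m'] s →
        ∫ x in s, g₀ x * f x ∂μ = ∫ x in s, iB x * f x ∂μ) ?_ ?_ ?_ ?_
    · -- indicator case
      intro c t ht hμt s hs
      have htΩ : MeasurableSet[mΩ] t := hm₁ t ht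
      set iT : Ω → ℝ := t.indicator (fun _ => (1:ℝ)) with hiT_def
      have hiT_int : Integrable iT μ := (integrable_const 1).indicator htΩ
      have hc : ∀ x, t.indicator (fun _ => c) x = c * iT x := by
        intro x; by_cases hx : x ∈ t <;>
          simp [hiT_def, Set.indicator_of_mem, Set.indicator_of_notMem, hx]
      have hL : ∫ x in s, g₀ x * t.indicator (fun _ => c) x ∂μ
          = c * ∫ x in s, g₀ x * iT x ∂μ := by
        rw [← integral_const_mul]
        refine integral_congr_ae (ae_of_all _ fun x => ?_)
        simp only [hc x]; ring
      have hR : ∫ x in s, iB x * t.indicator (fun _ => c) x ∂μ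
          = c * ∫ x in s, iB x * iT x ∂μ := by
        rw [← integral_const_mul]
        refine integral_congr_ae (ae_of_all _ fun x => ?_)
        simp only [hc x]; ring
      rw [hL, hR]
      congr 1
      -- main identity via conditional independence
      have hprod : ∀ x, iB x * iT x = (t ∩ B).indicator (fun _ => (1:ℝ)) x := by
        intro x
        by_cases hxB : x ∈ B <;> by_cases hxt : x ∈ t <;>
          simp [hiB_def, hiT_def, Set.indicator_apply, Set.mem_inter_iff, hxB, hxt]
      have hg₀iT_int : Integrable (fun x => g₀ x * iT x) μ :=
        hiT_int.bdd_mul hg₀_aesm hg₀_bd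
      have hCI' := (condIndep_iff m' m₁ m₂ hm' hm₁ hm₂ μ).mp hCI t B ht hB
      have htB_int : Integrable ((t ∩ B).indicator (fun _ => (1:ℝ))) μ :=
        (integrable_const 1).indicator (htΩ.inter hBΩ)
      have hmul : μ[fun x => g₀ x * iT x | m']
          =ᵐ[μ] μ[(t ∩ B).indicator (fun _ => (1:ℝ)) | m'] := by
        have h1 : μ[g₀ * iT | m'] =ᵐ[μ] g₀ * μ[iT | m'] :=
          condExp_stronglyMeasurable_mul_of_bound hm' hg₀_sm hiT_int 1 hg₀_bd
        refine h1.trans ?_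
        refine EventuallyEq.trans (EventuallyEq.of_eq (mul_comm g₀ (μ[iT | m']))) ?_
        exact hCI'.symm
      calc ∫ x in s, g₀ x * iT x ∂μ
          = ∫ x in s, (μ[fun x => g₀ x * iT x | m']) x ∂μ :=
            (setIntegral_condExp hm' hg₀iT_int hs).symm
        _ = ∫ x in s, (μ[(t ∩ B).indicator (fun _ => (1:ℝ)) | m']) x ∂μ :=
            integral_congr_ae (ae_restrict_of_ae hmul)
        _ = ∫ x in s, ((t ∩ B).indicator (fun _ => (1:ℝ))) x ∂μ :=
            setIntegral_condExp hm' htB_int hs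
        _ = ∫ x in s, iB x * iT x ∂μ := by
            refine integral_congr_ae (ae_of_all _ fun x => ?_)
            simp only [(hprod x).symm]
    · -- additivity
      intro u v hdisj hu hv hum hvm hPu hPv s hs
      have hu_int : Integrable u μ := memLp_one_iff_integrable.mp hu
      have hv_int : Integrable v μ := memLp_one_iff_integrable.mp hv
      have h1 : Integrable (fun x => g₀ x * u x) μ := hu_int.bdd_mul hg₀_aesm hg₀_bd
      have h2 : Integrable (fun x => g₀ x * v x) μ := hv_int.bdd_mul hg₀_aesm hg₀_bd
      have h3 : Integrable (fun x => iB x * u x) μ :=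
        hu_int.bdd_mul hiB_aesm (ae_of_all _ hiB_bd)
      have h4 : Integrable (fun x => iB x * v x) μ :=
        hv_int.bdd_mul hiB_aesm (ae_of_all _ hiB_bd)
      have hL : ∫ x in s, g₀ x * (u + v) x ∂μ
          = ∫ x in s, g₀ x * u x ∂μ + ∫ x in s, g₀ x * v x ∂μ := by
        rw [← integral_add (h1.restrict (s := s)) (h2.restrict (s := s))]
        refine integral_congr_ae (ae_of_all _ fun x => ?_)
        simp [mul_add]
      have hR : ∫ x in s, iB x * (u + v) x ∂μ
          = ∫ x in s, iB x * u x ∂μ + ∫ x in s, iB x * v x ∂μ := by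
        rw [← integral_add (h3.restrict (s := s)) (h4.restrict (s := s))]
        refine integral_congr_ae (ae_of_all _ fun x => ?_)
        simp [mul_add]
      rw [hL, hR, hPu s hs, hPv s hs]
    · -- closedness
      rw [Set.setOf_forall]
      refine isClosed_iInter (fun s => ?_)
      by_cases hs : MeasurableSet[m'] s
      · have heq : {F : lpMeas ℝ ℝ m₁ 1 μ | MeasurableSet[m'] s →
            ∫ x in s, g₀ x * (F : Ω → ℝ) x ∂μ = ∫ x in s, iB x * (F : Ω → ℝ) x ∂μ}
            = {F : lpMeas ℝ ℝ m₁ 1 μ |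
            (fun G : Lp ℝ 1 μ => ∫ x in s, g₀ x * G x ∂μ) (F : Lp ℝ 1 μ)
              = (fun G : Lp ℝ 1 μ => ∫ x in s, iB x * G x ∂μ) (F : Lp ℝ 1 μ)} := by
          exact Set.ext fun F => ⟨fun h => h hs, fun h _ => h⟩
        rw [heq]
        exact isClosed_eq
          ((cont_weight_pairing hg₀_aesm hg₀_bd s).comp continuous_subtype_val)
          ((cont_weight_pairing hiB_aesm (ae_of_all _ hiB_bd) s).comp continuous_subtype_val)
      · have heq : {F : lpMeas ℝ ℝ m₁ 1 μ | MeasurableSet[m'] s →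
            ∫ x in s, g₀ x * (F : Ω → ℝ) x ∂μ = ∫ x in s, iB x * (F : Ω → ℝ) x ∂μ}
            = Set.univ := by
          exact Set.ext fun F => ⟨fun _ => trivial, fun _ h => absurd h hs⟩
        rw [heq]; exact isClosed_univ
    · -- a.e. congruence
      intro u v huv hu hP s hs
      have e1 : ∫ x in s, g₀ x * u x ∂μ = ∫ x in s, g₀ x * v x ∂μ :=
        integral_congr_ae (ae_restrict_of_ae (huv.mono fun x hx => by simp only [hx]))
      have e2 : ∫ x in s, iB x * u x ∂μ = ∫ x in s, iB x * v x ∂μ :=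
        integral_congr_ae (ae_restrict_of_ae (huv.mono fun x hx => by simp only [hx]))
      rw [← e1, ← e2]
      exact hP s hs
  -- conclude via the set-integral characterization of condexp
  have hiBf_int : Integrable (fun ω => iB ω * f ω) μ :=
    hfint.bdd_mul hiB_aesm (ae_of_all _ hiB_bd)
  have hg₀f_int : Integrable (g₀ * f) μ := hfint.bdd_mul hg₀_aesm hg₀_bd
  have hpull : μ[g₀ * f | m'] =ᵐ[μ] g₀ * μ[f | m'] :=
    condExp_stronglyMeasurable_mul_of_bound hm' hg₀_sm hfint 1 hg₀_bd
  have hcand_int : Integrable (fun ω => g₀ ω * (μ[f | m']) ω) μ :=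
    integrable_condExp.bdd_mul hg₀_aesm hg₀_bd
  have hcand_sm : AEStronglyMeasurable[m'] (fun ω => g₀ ω * (μ[f | m']) ω) μ :=
    (hg₀_sm.mul stronglyMeasurable_condExp).aestronglyMeasurable
  refine (ae_eq_condExp_of_forall_setIntegral_eq hm' hiBf_int
    (fun s _ _ => hcand_int.integrableOn) (fun s hs _ => ?_) hcand_sm).symm
  calc ∫ x in s, g₀ x * (μ[f | m']) x ∂μ
      = ∫ x in s, (μ[g₀ * f | m']) x ∂μ :=
        (integral_congr_ae (ae_restrict_of_ae hpull)).symm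
    _ = ∫ x in s, g₀ x * f x ∂μ := setIntegral_condExp hm' hg₀f_int hs
    _ = ∫ x in s, iB x * f x ∂μ :=
        hset (memLp_one_iff_integrable.mpr hfint) hf.aestronglyMeasurable s hs

/-- Per-arm IPW identity. -/
lemma arm_integral
    {mX G mT mA mR mY : MeasurableSpace Ω}
    [mΩ : MeasurableSpace Ω] [StandardBorelSpace Ω] {P : Measure Ω} [IsProbabilityMeasure P]
    (hmX : mX ≤ mΩ) (hG : G ≤ mΩ) (hmXG : mX ≤ G)
    (hmT : mT ≤ mΩ) (hmA : mA ≤ mΩ) (hmR : mR ≤ mΩ) (hmY : mY ≤ mΩ)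
    (hmA_G : mA ≤ G)
    (hunconf : CondIndep mX mT mA hmX P)
    (hseq : CondIndep G mR mY hG P)
    {BA BR : Set Ω} (hBA : MeasurableSet[mA] BA) (hBR : MeasurableSet[mR] BR)
    {Ya Yo : Ω → ℝ} (hYa_sm : StronglyMeasurable[mT] Ya) (hYa_int : Integrable Ya P)
    (hYo_sm : StronglyMeasurable[mY] Yo) (hYo_int : Integrable Yo P)
    (hcons : ∀ ω, BA.indicator (fun _ => (1:ℝ)) ω * Yo ω
      = BA.indicator (fun _ => (1:ℝ)) ω * Ya ω)
    {ea r₃ : Ω → ℝ} (hea_m : Measurable[mX] ea) (hea_pos : ∀ᵐ ω ∂P, 0 < ea ω)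
    (heVer : ea =ᵐ[P] P[BA.indicator (fun _ => (1:ℝ)) | mX])
    (hr₃_m : Measurable[G] r₃) (hr₃_pos : ∀ᵐ ω ∂P, 0 < r₃ ω)
    (hrVer : r₃ =ᵐ[P] P[BR.indicator (fun _ => (1:ℝ)) | G])
    (hWint : Integrable (fun ω => BA.indicator (fun _ => (1:ℝ)) ω *
        BR.indicator (fun _ => (1:ℝ)) ω * Yo ω / (ea ω * r₃ ω)) P) :
    ∫ ω, (BA.indicator (fun _ => (1:ℝ)) ω * BR.indicator (fun _ => (1:ℝ)) ω * Yo ω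
      / (ea ω * r₃ ω)) ∂P = ∫ ω, Ya ω ∂P := by
  classical
  set iA : Ω → ℝ := BA.indicator (fun _ => (1:ℝ)) with hiA_def
  set iR : Ω → ℝ := BR.indicator (fun _ => (1:ℝ)) with hiR_def
  have hiA_bd : ∀ x, ‖iA x‖ ≤ 1 := by
    intro x; by_cases hx : x ∈ BA <;>
      simp [hiA_def, Set.indicator_of_mem, Set.indicator_of_notMem, hx]
  have hiR_bd : ∀ x, ‖iR x‖ ≤ 1 := by
    intro x; by_cases hx : x ∈ BR <;>
      simp [hiR_def, Set.indicator_of_mem, Set.indicator_of_notMem, hx]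
  have hiA_aesm : AEStronglyMeasurable iA P :=
    (measurable_const.indicator (hmA BA hBA)).aestronglyMeasurable
  have hiR_aesm : AEStronglyMeasurable iR P :=
    (measurable_const.indicator (hmR BR hBR)).aestronglyMeasurable
  have hiA_G_m : Measurable[G] iA := measurable_const.indicator (hmA_G BA hBA)
  have hea_G_m : Measurable[G] ea := hea_m.mono hmXG le_rfl
  set φ : Ω → ℝ := fun ω => iA ω / (ea ω * r₃ ω) with hφ_def
  have hφ_sm : StronglyMeasurable[G] φ :=
    (hiA_G_m.div (hea_G_m.mul hr₃_m)).stronglyMeasurable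
  set W : Ω → ℝ := fun ω => iA ω * iR ω * Yo ω / (ea ω * r₃ ω) with hW_def
  have hWeq : W = fun ω => φ ω * (iR ω * Yo ω) := by
    funext ω; rw [hW_def, hφ_def]; ring
  have hRYo_int : Integrable (fun ω => iR ω * Yo ω) P :=
    hYo_int.bdd_mul hiR_aesm (ae_of_all _ hiR_bd)
  have hIYo_int : Integrable (fun ω => iA ω * Yo ω) P :=
    hYo_int.bdd_mul hiA_aesm (ae_of_all _ hiA_bd)
  -- Step 1: conditional expectation given G
  have hWint' : Integrable (fun ω => φ ω * (iR ω * Yo ω)) P := by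
    rw [← hWeq]; exact hWint
  have h1 : P[W | G] =ᵐ[P] fun ω => φ ω * (P[fun ω' => iR ω' * Yo ω' | G]) ω := by
    rw [hWeq]
    exact condExp_mul_of_stronglyMeasurable_left hφ_sm hWint' hRYo_int
  have h2 : P[fun ω' => iR ω' * Yo ω' | G] =ᵐ[P] fun ω => r₃ ω * (P[Yo | G]) ω := by
    have hkey := condIndep_condexp_indicator_mul hG hmY hmR (Kernel.Indep.symm hseq) hBR hYo_sm hYo_int
    filter_upwards [hkey, hrVer] with ω hk hv
    rw [hk, ← hv]
  -- insert iA and use consistency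
  have hpaux : P[fun ω' => iA ω' * Yo ω' | G] =ᵐ[P] fun ω => iA ω * (P[Yo | G]) ω :=
    condExp_mul_of_stronglyMeasurable_left hiA_G_m.stronglyMeasurable hIYo_int hYo_int
  have hconsfun : (fun ω' => iA ω' * Yo ω') = fun ω' => iA ω' * Ya ω' := funext hcons
  have hV2 : P[W | G] =ᵐ[P]
      fun ω => (ea ω)⁻¹ * (P[fun ω' => iA ω' * Ya ω' | G]) ω := by
    rw [← hconsfun]
    filter_upwards [h1, h2, hpaux, hr₃_pos] with ω e1 e2 e3 hr
    rw [e1, e2, e3, hφ_def]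
    have hstep : iA ω / (ea ω * r₃ ω) * (r₃ ω * (P[Yo|G]) ω)
        = iA ω * (P[Yo|G]) ω * r₃ ω / (ea ω * r₃ ω) := by ring
    rw [hstep, mul_div_mul_right _ _ hr.ne', div_eq_inv_mul]
  -- Step 2: tower to mX and unconfoundedness
  have hF_int : Integrable (fun ω => (ea ω)⁻¹ * (P[fun ω' => iA ω' * Ya ω' | G]) ω) P :=
    integrable_condExp.congr hV2
  have hea_inv_sm : StronglyMeasurable[mX] (fun ω => (ea ω)⁻¹) :=
    hea_m.inv.stronglyMeasurable
  have hpull2 : P[fun ω => (ea ω)⁻¹ * (P[fun ω' => iA ω' * Ya ω' | G]) ω | mX]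
      =ᵐ[P] fun ω => (ea ω)⁻¹ * (P[P[fun ω' => iA ω' * Ya ω' | G] | mX]) ω :=
    condExp_mul_of_stronglyMeasurable_left hea_inv_sm hF_int integrable_condExp
  have htower : P[P[fun ω' => iA ω' * Ya ω' | G] | mX]
      =ᵐ[P] P[fun ω' => iA ω' * Ya ω' | mX] := condExp_condExp_of_le hmXG hG
  have hIYa_int : Integrable (fun ω => iA ω * Ya ω) P :=
    hYa_int.bdd_mul hiA_aesm (ae_of_all _ hiA_bd)
  have hkey2 : P[fun ω' => iA ω' * Ya ω' | mX]
      =ᵐ[P] fun ω => (P[iA | mX]) ω * (P[Ya | mX]) ω :=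
    condIndep_condexp_indicator_mul hmX hmT hmA hunconf hBA hYa_sm hYa_int
  have hfinal : P[P[W | G] | mX] =ᵐ[P] P[Ya | mX] := by
    refine (condExp_congr_ae hV2).trans (hpull2.trans ?_)
    filter_upwards [htower, hkey2, heVer, hea_pos] with ω ht hk hv hp
    rw [ht, hk, ← hv, inv_mul_cancel_left₀ hp.ne']
  calc ∫ ω, (iA ω * iR ω * Yo ω / (ea ω * r₃ ω)) ∂P
      = ∫ ω, (P[W | G]) ω ∂P := (integral_condExp hG).symm
    _ = ∫ ω, (P[P[W | G] | mX]) ω ∂P := (integral_condExp hmX).symm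
    _ = ∫ ω, (P[Ya | mX]) ω ∂P := integral_congr_ae hfinal
    _ = ∫ ω, Ya ω ∂P := integral_condExp hmX


end Aux

/-- **Inverse probability weighted representation of the long-term ATE.** Under
consistency, unconfoundedness for both arms, and sequential missingness, with a.s. positive
propensity scores `e₁(X), e₀(X)` and selection score `r₃`,
`E[(𝟙{A=1}/e₁(X) − 𝟙{A=0}/e₀(X))·R₃·Y/r₃] = E[Y(1) − Y(0)]`.
(Arm `1` is `true`, arm `0` is `false`.) -/
theorem stmt5
    {Ω 𝓧 : Type*} [mΩ : MeasurableSpace Ω] [StandardBorelSpace Ω] [Nonempty Ω]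
    [m𝓧 : MeasurableSpace 𝓧] [StandardBorelSpace 𝓧]
    (P : Measure Ω) [IsProbabilityMeasure P]
    (X : Ω → 𝓧) (hX : Measurable X)
    (A : Ω → Bool) (hA : Measurable A)
    (S₁ S₂ Y : Bool → Ω → ℝ)
    (hS₁ : ∀ a, Measurable (S₁ a)) (hS₂ : ∀ a, Measurable (S₂ a))
    (hYmeas : ∀ a, Measurable (Y a)) (hYint : ∀ a, Integrable (Y a) P)
    (S₁o S₂o Yo : Ω → ℝ)
    (hS₁o : Measurable S₁o) (hS₂o : Measurable S₂o) (hYo : Measurable Yo)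
    (hcons₁ : S₁o = fun ω => S₁ (A ω) ω)
    (hcons₂ : S₂o = fun ω => S₂ (A ω) ω)
    (hconsY : Yo = fun ω => Y (A ω) ω)
    (R₃ : Ω → Bool) (hR₃ : Measurable R₃)
    -- unconfoundedness for each arm
    (hunconf : ∀ a : Bool, CondIndep (MeasurableSpace.comap X m𝓧)
      (MeasurableSpace.comap (fun ω => (S₁ a ω, S₂ a ω, Y a ω)) inferInstance)
      (MeasurableSpace.comap A inferInstance) hX.comap_le P)
    -- sequential missingness of the long-term outcome
    (hseq3 : CondIndep
      (MeasurableSpace.comap X m𝓧 ⊔ MeasurableSpace.comap A inferInstance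
        ⊔ MeasurableSpace.comap S₁o inferInstance ⊔ MeasurableSpace.comap S₂o inferInstance)
      (MeasurableSpace.comap R₃ inferInstance) (MeasurableSpace.comap Yo inferInstance)
      (sup_le (sup_le (sup_le hX.comap_le hA.comap_le) hS₁o.comap_le) hS₂o.comap_le) P)
    -- propensity scores
    (e : Bool → 𝓧 → ℝ) (he : ∀ a, Measurable (e a))
    (heVer : ∀ a : Bool, (fun ω => e a (X ω)) =ᵐ[P]
      P[({ω | A ω = a}).indicator (fun _ => (1 : ℝ)) | MeasurableSpace.comap X m𝓧])
    (hePos : ∀ a : Bool, ∀ᵐ ω ∂P, 0 < e a (X ω))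
    -- selection score
    (r₃ : Ω → ℝ)
    (hr₃Meas : Measurable[MeasurableSpace.comap X m𝓧 ⊔ MeasurableSpace.comap A inferInstance
      ⊔ MeasurableSpace.comap S₁o inferInstance ⊔ MeasurableSpace.comap S₂o inferInstance] r₃)
    (hr₃Ver : r₃ =ᵐ[P] P[({ω | R₃ ω = true}).indicator (fun _ => (1 : ℝ)) |
      MeasurableSpace.comap X m𝓧 ⊔ MeasurableSpace.comap A inferInstance
        ⊔ MeasurableSpace.comap S₁o inferInstance ⊔ MeasurableSpace.comap S₂o inferInstance])
    (hr₃Pos : ∀ᵐ ω ∂P, 0 < r₃ ω)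
    -- integrability of the weighted outcomes
    (hWint : ∀ a : Bool, Integrable (fun ω => ({ω' | A ω' = a}).indicator (fun _ => (1 : ℝ)) ω
      * ({ω' | R₃ ω' = true}).indicator (fun _ => (1 : ℝ)) ω * Yo ω / (e a (X ω) * r₃ ω)) P) :
    ∫ ω, (({ω' | A ω' = true}).indicator (fun _ => (1 : ℝ)) ω / e true (X ω)
        - ({ω' | A ω' = false}).indicator (fun _ => (1 : ℝ)) ω / e false (X ω))
        * ({ω' | R₃ ω' = true}).indicator (fun _ => (1 : ℝ)) ω * Yo ω / r₃ ω ∂P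
      = ∫ ω, (Y true ω - Y false ω) ∂P := by
  classical
  have hYoInt : Integrable Yo P := by
    refine Integrable.mono' ((hYint true).abs.add (hYint false).abs)
      hYo.aestronglyMeasurable (ae_of_all _ fun ω => ?_)
    rw [hconsY]
    show ‖Y (A ω) ω‖ ≤ |Y true ω| + |Y false ω|
    rw [Real.norm_eq_abs]
    cases A ω
    · exact le_add_of_nonneg_left (abs_nonneg _)
    · exact le_add_of_nonneg_right (abs_nonneg _)
  have harm : ∀ a : Bool,
      ∫ ω, (({ω' | A ω' = a}).indicator (fun _ => (1 : ℝ)) ω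
        * ({ω' | R₃ ω' = true}).indicator (fun _ => (1 : ℝ)) ω * Yo ω
        / (e a (X ω) * r₃ ω)) ∂P = ∫ ω, Y a ω ∂P := by
    intro a
    have hT : Measurable[MeasurableSpace.comap (fun ω => (S₁ a ω, S₂ a ω, Y a ω))
        inferInstance] (fun ω => (S₁ a ω, S₂ a ω, Y a ω)) :=
      measurable_iff_comap_le.mpr le_rfl
    have hYa_sm : StronglyMeasurable[MeasurableSpace.comap
        (fun ω => (S₁ a ω, S₂ a ω, Y a ω)) inferInstance] (Y a) :=
      ((measurable_snd.comp measurable_snd).comp hT).stronglyMeasurable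
    have hYo_sm : StronglyMeasurable[MeasurableSpace.comap Yo inferInstance] Yo :=
      (measurable_iff_comap_le.mpr le_rfl).stronglyMeasurable
    have hcons : ∀ ω, ({ω' | A ω' = a}).indicator (fun _ => (1:ℝ)) ω * Yo ω
        = ({ω' | A ω' = a}).indicator (fun _ => (1:ℝ)) ω * Y a ω := by
      intro ω
      by_cases h : A ω = a
      · have hYoω : Yo ω = Y a ω := by rw [hconsY]; show Y (A ω) ω = Y a ω; rw [h]
        rw [hYoω]
      · rw [Set.indicator_of_notMem (show ω ∉ {ω' | A ω' = a} from h), zero_mul, zero_mul]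
    exact arm_integral (P := P) hX.comap_le
      (sup_le (sup_le (sup_le hX.comap_le hA.comap_le) hS₁o.comap_le) hS₂o.comap_le)
      (le_sup_left.trans (le_sup_left.trans le_sup_left))
      ((hS₁ a).prodMk ((hS₂ a).prodMk (hYmeas a))).comap_le hA.comap_le
      hR₃.comap_le hYo.comap_le
      (le_sup_right.trans (le_sup_left.trans le_sup_left))
      (hunconf a) hseq3
      (⟨{a}, trivial, rfl⟩ : MeasurableSet[MeasurableSpace.comap A inferInstance]
        {ω' | A ω' = a})
      (⟨{true}, trivial, rfl⟩ : MeasurableSet[MeasurableSpace.comap R₃ inferInstance]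
        {ω' | R₃ ω' = true})
      hYa_sm (hYint a) hYo_sm hYoInt hcons
      ((he a).comp (measurable_iff_comap_le.mpr le_rfl)) (hePos a) (heVer a)
      hr₃Meas hr₃Pos hr₃Ver (hWint a)
  have hLHS : (fun ω => (({ω' | A ω' = true}).indicator (fun _ => (1 : ℝ)) ω / e true (X ω)
        - ({ω' | A ω' = false}).indicator (fun _ => (1 : ℝ)) ω / e false (X ω))
        * ({ω' | R₃ ω' = true}).indicator (fun _ => (1 : ℝ)) ω * Yo ω / r₃ ω)
      = fun ω => (({ω' | A ω' = true}).indicator (fun _ => (1 : ℝ)) ω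
          * ({ω' | R₃ ω' = true}).indicator (fun _ => (1 : ℝ)) ω * Yo ω
          / (e true (X ω) * r₃ ω))
        - (({ω' | A ω' = false}).indicator (fun _ => (1 : ℝ)) ω
          * ({ω' | R₃ ω' = true}).indicator (fun _ => (1 : ℝ)) ω * Yo ω
          / (e false (X ω) * r₃ ω)) := by
    funext ω
    simp only [sub_mul, sub_div, div_mul_eq_mul_div, div_div]
  rw [hLHS]
  rw [integral_sub (hWint true) (hWint false), harm true, harm false,
    ← integral_sub (hYint true) (hYint false)]
end
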